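/- Let A be a bounded self-adjoint operator on l²(E) which is positive and boundedly invertible (so that ⟨f, A f⟩ ≥ λ⟨f,f⟩ for some λ > 0). Let x₀ ∈ E and let E = {x₀} ∪ R₁ ∪ R₂ be a partition of E (R₁ or R₂ may be empty). Define α := inf{⟨e_{x₀} − f, A(e_{x₀} − f)⟩ : f in the linear span of {e_y : y ∈ R₁}} and β := inf{⟨e_{x₀} − g, A^{-1}(e_{x₀} − g)⟩ : g in the linear span of {e_y : y ∈ R₂}}. Then α·β = 1. -/

import Mathlib

set_option maxHeartbeats 4000000
set_option synthInstance.maxHeartbeats 400000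

local notation "⟪" x ", " y "⟫" => @inner ℂ _ _ x y

noncomputable def evec {E : Type*} [DecidableEq E] (x : E) : lp (fun _ : E => ℂ) 2 :=
  lp.single 2 x 1

section helpers

variable {E : Type*} [DecidableEq E]

theorem lp_eval_continuous (z : E) : Continuous (fun f : lp (fun _ : E => ℂ) 2 => (f z : ℂ)) := by
  have h : LipschitzWith 1 (fun f : lp (fun _ : E => ℂ) 2 => (f z : ℂ)) :=
    LipschitzWith.mk_one (fun f g => by
      simpa [dist_eq_norm, ← lp.coeFn_sub] using lp.norm_apply_le_norm two_ne_zero (f - g) z)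
  exact h.continuous

theorem span_apply_eq_zero {S : Set E} {f : lp (fun _ : E => ℂ) 2}
    (hf : f ∈ Submodule.span ℂ (evec '' S)) {z : E} (hz : z ∉ S) : f z = 0 := by
  induction hf using Submodule.span_induction with
  | mem g hg =>
    obtain ⟨y, hy, rfl⟩ := hg
    exact lp.single_apply_ne 2 y 1 (by rintro rfl; exact hz hy)
  | zero => simp [lp.coeFn_zero]
  | add g h _ _ hg hh => simp [lp.coeFn_add, hg, hh]
  | smul c g _ hg => simp [lp.coeFn_smul, hg]

theorem closure_span_apply_eq_zero {S : Set E} {f : lp (fun _ : E => ℂ) 2}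
    (hf : f ∈ closure (Submodule.span ℂ (evec '' S) : Set (lp (fun _ : E => ℂ) 2)))
    {z : E} (hz : z ∉ S) : f z = 0 := by
  have hcl : IsClosed {g : lp (fun _ : E => ℂ) 2 | g z = 0} :=
    isClosed_eq (lp_eval_continuous z) continuous_const
  exact closure_minimal (fun g hg => span_apply_eq_zero hg hz) hcl hf

theorem mem_closure_span_of_support {S : Set E} {f : lp (fun _ : E => ℂ) 2}
    (hf : ∀ z, z ∉ S → f z = 0) :
    f ∈ closure (Submodule.span ℂ (evec '' S) : Set (lp (fun _ : E => ℂ) 2)) := by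
  have hsum : HasSum (fun i : E => lp.single 2 i (f i)) f :=
    lp.hasSum_single ENNReal.ofNat_ne_top f
  refine mem_closure_of_tendsto hsum (Filter.Eventually.of_forall ?_)
  intro s
  refine Submodule.sum_mem _ ?_
  intro i _
  by_cases hi : i ∈ S
  · have : lp.single 2 i (f i) = f i • evec i := by
      rw [evec, ← lp.single_smul]
      norm_num
    rw [this]
    exact Submodule.smul_mem _ _ (Submodule.subset_span ⟨i, hi, rfl⟩)
  · rw [hf i hi]
    have h0 : lp.single (E := fun _ : E => ℂ) 2 i (0 : ℂ) = 0 := by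
      have := lp.single_smul (E := fun _ : E => ℂ) 2 i (1 : ℂ) (0 : ℂ)
      simpa using this
    rw [h0]
    exact Submodule.zero_mem _

theorem inner_evec_left (x : E) (f : lp (fun _ : E => ℂ) 2) : ⟪evec x, f⟫ = f x := by
  simp [evec, lp.inner_single_left]

theorem inner_evec_right (x : E) (f : lp (fun _ : E => ℂ) 2) :
    ⟪f, evec x⟫ = starRingEnd ℂ (f x) := by
  simp [evec, lp.inner_single_right]

variable {H : Type*} [NormedAddCommGroup H] [InnerProductSpace ℂ H]

/-- Expansion of the quadratic form along a complex line. -/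
theorem expand_quad (A : H →L[ℂ] H) (hsa : ∀ f g : H, ⟪A f, g⟫ = ⟪f, A g⟫)
    (x w : H) (t : ℂ) :
    ⟪x - t • w, A (x - t • w)⟫ =
      ⟪x, A x⟫ - t * starRingEnd ℂ ⟪w, A x⟫ - starRingEnd ℂ t * ⟪w, A x⟫
        + starRingEnd ℂ t * t * ⟪w, A w⟫ := by
  have h1 : ⟪x, A w⟫ = starRingEnd ℂ ⟪w, A x⟫ := by
    rw [← hsa x w, ← inner_conj_symm]
  rw [map_sub, map_smul, inner_sub_left, inner_sub_right, inner_sub_right,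
    inner_smul_left, inner_smul_right, inner_smul_right, inner_smul_left, h1]
  ring

/-- Parallelogram law for the quadratic form of `A`. -/
theorem quad_parallelogram (A : H →L[ℂ] H) (u v : H) :
    ⟪u - v, A (u - v)⟫ + ⟪u + v, A (u + v)⟫ = 2 * ⟪u, A u⟫ + 2 * ⟪v, A v⟫ := by
  rw [map_sub, map_add, inner_sub_left, inner_sub_right, inner_sub_right,
    inner_add_left, inner_add_right, inner_add_right]
  ring

/-- The quadratic form of a self-adjoint operator is real. -/
theorem quad_real (A : H →L[ℂ] H) (hsa : ∀ f g : H, ⟪A f, g⟫ = ⟪f, A g⟫) (x : H) :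
    ⟪x, A x⟫ = ((⟪x, A x⟫ : ℂ).re : ℂ) := by
  have h : starRingEnd ℂ ⟪x, A x⟫ = ⟪x, A x⟫ := by
    rw [inner_conj_symm, hsa]
  exact (Complex.conj_eq_iff_re.mp h).symm

theorem quad_continuous (A : H →L[ℂ] H) (e : H) :
    Continuous (fun f : H => (⟪e - f, A (e - f)⟫ : ℂ).re) := by
  have c1 : Continuous fun f : H => e - f := continuous_const.sub continuous_id
  exact Complex.continuous_re.comp (Continuous.inner c1 (A.continuous.comp c1))

end helpers

theorem statement2 {E : Type*} [Countable E] [DecidableEq E]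
    (A B : lp (fun _ : E => ℂ) 2 →L[ℂ] lp (fun _ : E => ℂ) 2)
    (hsa : ∀ f g : lp (fun _ : E => ℂ) 2, (inner ℂ (A f) g : ℂ) = inner ℂ f (A g))
    (lam : ℝ) (hlam : 0 < lam)
    (hcoer : ∀ f : lp (fun _ : E => ℂ) 2, lam * ‖f‖ ^ 2 ≤ (inner ℂ f (A f) : ℂ).re)
    (hAB : ∀ f, A (B f) = f) (hBA : ∀ f, B (A f) = f)
    (x₀ : E) (R₁ R₂ : Set E)
    (hx₁ : x₀ ∉ R₁) (hx₂ : x₀ ∉ R₂) (hdisj : Disjoint R₁ R₂)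
    (hcover : insert x₀ (R₁ ∪ R₂) = (Set.univ : Set E)) :
    sInf ((fun f => (inner ℂ (evec x₀ - f) (A (evec x₀ - f)) : ℂ).re) ''
        (Submodule.span ℂ (evec '' R₁) : Set (lp (fun _ : E => ℂ) 2))) *
      sInf ((fun g => (inner ℂ (evec x₀ - g) (B (evec x₀ - g)) : ℂ).re) ''
        (Submodule.span ℂ (evec '' R₂) : Set (lp (fun _ : E => ℂ) 2))) = 1 := by
  classical
  set H := lp (fun _ : E => ℂ) 2
  set e : H := evec x₀ with he
  set Φ : H → ℝ := fun f => (⟪e - f, A (e - f)⟫ : ℂ).re with hΦ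
  set Ψ : H → ℝ := fun g => (⟪e - g, B (e - g)⟫ : ℂ).re with hΨ
  set V₁ : Submodule ℂ H := Submodule.span ℂ (evec '' R₁) with hV₁
  set V₂ : Submodule ℂ H := Submodule.span ℂ (evec '' R₂) with hV₂
  set α : ℝ := sInf (Φ '' (V₁ : Set H)) with hα
  set β : ℝ := sInf (Ψ '' (V₂ : Set H)) with hβ
  -- basic facts about e
  have he_x₀ : e x₀ = 1 := lp.single_apply_self 2 x₀ 1
  have he_ne : ∀ z, z ≠ x₀ → e z = 0 := fun z hz => lp.single_apply_ne 2 x₀ 1 hz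
  -- B is self-adjoint
  have hsb : ∀ f g : H, ⟪B f, g⟫ = ⟪f, B g⟫ := by
    intro f g
    conv_lhs => rw [← hAB g]
    rw [← hsa (B f) (B g)]
    conv_lhs => rw [hAB f]
  -- operator norm of A is positive
  have hAe : (⟪e, A e⟫ : ℂ).re ≠ 0 := by
    have h1 : (1 : ℝ) ≤ ‖e‖ := by
      have := lp.norm_apply_le_norm two_ne_zero e x₀
      rw [he_x₀] at this
      simpa using this
    have h2 : (1:ℝ) ≤ ‖e‖ ^ 2 := by nlinarith
    have h3 := hcoer e
    nlinarith
  have hAnorm : 0 < ‖A‖ := by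
    rcases (norm_nonneg A).lt_or_eq with h | h
    · exact h
    · exfalso
      have hA0 : A = 0 := (ContinuousLinearMap.opNorm_zero_iff A).mp h.symm
      rw [hA0] at hAe
      simp at hAe
  -- B coercive
  set lamB : ℝ := lam / ‖A‖ ^ 2 with hlamB
  have hlamBpos : 0 < lamB := div_pos hlam (by positivity)
  have hcoerB : ∀ f : H, lamB * ‖f‖ ^ 2 ≤ (⟪f, B f⟫ : ℂ).re := by
    intro f
    have h1 : (⟪f, B f⟫ : ℂ) = ⟪B f, A (B f)⟫ := by
      rw [← hsa (B f) (B f), hAB]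
    have h2 := hcoer (B f)
    have h3 : ‖f‖ ≤ ‖A‖ * ‖B f‖ := by
      calc ‖f‖ = ‖A (B f)‖ := by rw [hAB]
        _ ≤ ‖A‖ * ‖B f‖ := A.le_opNorm (B f)
    have h4 : ‖f‖ ^ 2 ≤ ‖A‖ ^ 2 * ‖B f‖ ^ 2 := by nlinarith [norm_nonneg f, norm_nonneg (B f), norm_nonneg A]
    rw [h1]
    have : lamB * ‖f‖ ^ 2 ≤ lam * ‖B f‖ ^ 2 := by
      rw [hlamB, div_mul_eq_mul_div, div_le_iff₀ (by positivity)]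
      nlinarith
    linarith
  -- lower bounds for the quadratic forms on the spans
  have hnorm_ge : ∀ f : H, f x₀ = 0 → (1 : ℝ) ≤ ‖e - f‖ := by
    intro f hf
    have h1 := lp.norm_apply_le_norm two_ne_zero (e - f) x₀
    have h2 : (e - f) x₀ = 1 := by
      have : (e - f) x₀ = e x₀ - f x₀ := by rw [lp.coeFn_sub]; rfl
      rw [this, he_x₀, hf, sub_zero]
    rw [h2] at h1
    simpa using h1
  have hΦ_ge : ∀ f ∈ V₁, lam ≤ Φ f := by
    intro f hf
    have h0 : f x₀ = 0 := span_apply_eq_zero hf hx₁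
    have h1 := hnorm_ge f h0
    have h2 := hcoer (e - f)
    have hsq : (1:ℝ) ≤ ‖e - f‖ ^ 2 := by nlinarith [h1, sq_nonneg (‖e - f‖ - 1)]
    have h3 : lam ≤ lam * ‖e - f‖ ^ 2 := by nlinarith [mul_le_mul_of_nonneg_left hsq hlam.le]
    exact le_trans h3 h2
  have hΨ_ge : ∀ g ∈ V₂, lamB ≤ Ψ g := by
    intro g hg
    have h0 : g x₀ = 0 := span_apply_eq_zero hg hx₂
    have h1 := hnorm_ge g h0
    have h2 := hcoerB (e - g)
    have hsq : (1:ℝ) ≤ ‖e - g‖ ^ 2 := by nlinarith [h1, sq_nonneg (‖e - g‖ - 1)]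
    have h3 : lamB ≤ lamB * ‖e - g‖ ^ 2 := by nlinarith [mul_le_mul_of_nonneg_left hsq hlamBpos.le]
    exact le_trans h3 h2
  have hS₁ne : (Φ '' (V₁ : Set H)).Nonempty := ⟨Φ 0, 0, Submodule.zero_mem _, rfl⟩
  have hS₂ne : (Ψ '' (V₂ : Set H)).Nonempty := ⟨Ψ 0, 0, Submodule.zero_mem _, rfl⟩
  have hS₁bdd : BddBelow (Φ '' (V₁ : Set H)) := by
    refine ⟨lam, ?_⟩
    rintro a ⟨f, hf, rfl⟩
    exact hΦ_ge f hf
  have hS₂bdd : BddBelow (Ψ '' (V₂ : Set H)) := by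
    refine ⟨lamB, ?_⟩
    rintro a ⟨g, hg, rfl⟩
    exact hΨ_ge g hg
  have hαlam : lam ≤ α := le_csInf hS₁ne (by rintro a ⟨f, hf, rfl⟩; exact hΦ_ge f hf)
  have hβlam : lamB ≤ β := le_csInf hS₂ne (by rintro a ⟨g, hg, rfl⟩; exact hΨ_ge g hg)
  have hαpos : 0 < α := lt_of_lt_of_le hlam hαlam
  have hβpos : 0 < β := lt_of_lt_of_le hlamBpos hβlam
  -- Cauchy–Schwarz direction: 1 ≤ Φ f * Ψ g
  have hCS : ∀ f ∈ V₁, ∀ g ∈ V₂, 1 ≤ Φ f * Ψ g := by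
    intro f hf g hg
    set x : H := e - f with hx
    set y : H := e - g with hy
    set z : H := B y with hz
    have hAz : A z = y := hAB y
    -- ⟪x, y⟫ = 1
    have hinner1 : (⟪x, y⟫ : ℂ) = 1 := by
      rw [hx, hy, inner_sub_left, inner_sub_right, inner_sub_right]
      have h1 : (⟪e, e⟫ : ℂ) = 1 := by rw [he, inner_evec_left, he_x₀]
      have h2 : (⟪e, g⟫ : ℂ) = 0 := by
        rw [he, inner_evec_left, span_apply_eq_zero hg hx₂]
      have h3 : (⟪f, e⟫ : ℂ) = 0 := by
        rw [he, inner_evec_right, span_apply_eq_zero hf hx₁]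
        simp
      have h4 : (⟪f, g⟫ : ℂ) = 0 := by
        rw [lp.inner_eq_tsum]
        have : ∀ i : E, ⟪f i, g i⟫ = (0 : ℂ) := by
          intro i
          by_cases hi : i ∈ R₁
          · have : g i = 0 := span_apply_eq_zero hg (fun h => hdisj.ne_of_mem hi h rfl)
            simp [this]
          · have : f i = 0 := span_apply_eq_zero hf hi
            simp [this]
        rw [tsum_congr this, tsum_zero]
      rw [h1, h2, h3, h4]
      ring
    have hxAz : (⟪x, A z⟫ : ℂ) = 1 := by rw [hAz, hinner1]
    have hzAx : (⟪z, A x⟫ : ℂ) = 1 := by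
      rw [← hsa z x, hAz, ← inner_conj_symm, hinner1]
      simp
    -- the quadratic inequality
    have hc : Ψ g = (⟪z, A z⟫ : ℂ).re := by
      have h' : (⟪e - g, B (e - g)⟫ : ℂ) = starRingEnd ℂ ⟪z, A z⟫ := by
        rw [hz, hAz, ← hy, ← inner_conj_symm]
      show (⟪e - g, B (e - g)⟫ : ℂ).re = _
      rw [h']
      simp
    have hcpos : 0 < (⟪z, A z⟫ : ℂ).re := by
      rw [← hc]; exact lt_of_lt_of_le hlamBpos (hΨ_ge g hg)
    set a : ℝ := Φ f with ha
    set c : ℝ := (⟪z, A z⟫ : ℂ).re with hcc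
    have hineq : ∀ t : ℝ, 0 ≤ a - 2 * t + t ^ 2 * c := by
      intro t
      have h1 := hcoer (x - (t : ℂ) • z)
      have h2 := expand_quad A hsa x z (t : ℂ)
      have h3 : (⟪x - (t : ℂ) • z, A (x - (t : ℂ) • z)⟫ : ℂ).re = a - 2 * t + t ^ 2 * c := by
        rw [h2]
        have hconj : starRingEnd ℂ ((t : ℝ) : ℂ) = ((t : ℝ) : ℂ) := Complex.conj_ofReal t
        rw [hxAz] at *
        have hswAx : starRingEnd ℂ (⟪z, A x⟫ : ℂ) = 1 := by rw [hzAx]; simp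
        have hxAx : (⟪x, A x⟫ : ℂ) = (a : ℂ) := by
          rw [ha, hΦ]
          exact quad_real A hsa x
        have hzAz : (⟪z, A z⟫ : ℂ) = (c : ℂ) := by
          rw [hcc]
          exact quad_real A hsa z
        rw [hconj, hswAx, hzAx, hxAx, hzAz]
        simp only [map_one, mul_one]
        rw [show ((a : ℂ) - (t : ℂ) - (t : ℂ) + (t : ℂ) * (t : ℂ) * (c : ℂ))
            = (((a - 2 * t + t ^ 2 * c : ℝ)) : ℂ) by push_cast; ring]
        exact Complex.ofReal_re _
      rw [h3] at h1
      nlinarith [sq_nonneg ‖x - (t : ℂ) • z‖, norm_nonneg (x - (t : ℂ) • z)]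
    have hac : 1 ≤ a * c := by
      have hc0 : c ≠ 0 := ne_of_gt hcpos
      have h := hineq (1 / c)
      have h2 : (1 / c) ^ 2 * c = 1 / c := by
        field_simp
      rw [h2] at h
      have h3 : 1 / c ≤ a := by linarith
      calc (1:ℝ) = (1 / c) * c := by field_simp
        _ ≤ a * c := mul_le_mul_of_nonneg_right h3 hcpos.le
    rw [hc]
    exact hac
  -- lower bound: 1 ≤ α * β
  have hlower : 1 ≤ α * β := by
    have hstep : ∀ f ∈ V₁, 1 / β ≤ Φ f := by
      intro f hf
      have hΦpos : 0 < Φ f := lt_of_lt_of_le hlam (hΦ_ge f hf)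
      have h1 : 1 / Φ f ≤ β := by
        refine le_csInf hS₂ne ?_
        rintro b ⟨g, hg, rfl⟩
        have := hCS f hf g hg
        rw [div_le_iff₀ hΦpos]
        linarith [mul_comm (Φ f) (Ψ g)]
      exact (one_div_le hΦpos hβpos).mp h1
    have : 1 / β ≤ α := le_csInf hS₁ne (by rintro a ⟨f, hf, rfl⟩; exact hstep f hf)
    rw [div_le_iff₀ hβpos] at this
    linarith
  -- upper bound: α * β ≤ 1
  have hupper : α * β ≤ 1 := by
    -- minimizing sequence for the first problem
    have hseq : ∀ n : ℕ, ∃ f, f ∈ V₁ ∧ Φ f < α + 1 / (n + 1) := by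
      intro n
      have hlt : α < α + 1 / (n + 1) := by
        have : (0:ℝ) < 1 / (n + 1) := by positivity
        linarith
      obtain ⟨b, hb, hblt⟩ := (csInf_lt_iff hS₁bdd hS₁ne).mp hlt
      obtain ⟨f, hf, rfl⟩ := hb
      exact ⟨f, hf, hblt⟩
    choose f hfmem hfΦ using hseq
    have hfge : ∀ n, α ≤ Φ (f n) := fun n => csInf_le hS₁bdd ⟨f n, hfmem n, rfl⟩
    -- quantitative Cauchy estimate
    have hkey : ∀ m n : ℕ, lam * ‖f n - f m‖ ^ 2 ≤ 2 / (m+1) + 2 / (n+1) := by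
      intro m n
      set u' : H := e - f m with hu'
      set v' : H := e - f n with hv'
      set mid : H := (2:ℂ)⁻¹ • (f m + f n) with hmid
      have hmidmem : mid ∈ V₁ :=
        Submodule.smul_mem _ _ (Submodule.add_mem _ (hfmem m) (hfmem n))
      have hαmid : α ≤ Φ mid := csInf_le hS₁bdd ⟨mid, hmidmem, rfl⟩
      have hpar := quad_parallelogram A u' v'
      have huv : u' - v' = f n - f m := by rw [hu', hv']; abel
      have huv2 : u' + v' = (2:ℂ) • (e - mid) := by
        rw [hu', hv', hmid, smul_sub, smul_inv_smul₀ (two_ne_zero)]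
        module
      have h4 : (⟪u' + v', A (u' + v')⟫ : ℂ).re = 4 * Φ mid := by
        rw [huv2, map_smul, inner_smul_left, inner_smul_right]
        have hc2 : (starRingEnd ℂ) (2:ℂ) = 2 := by
          rw [show (2:ℂ) = ((2:ℝ):ℂ) by norm_num, Complex.conj_ofReal]
        have : (starRingEnd ℂ) (2:ℂ) * ((2:ℂ) * ⟪e - mid, A (e - mid)⟫)
            = ((4:ℝ) : ℂ) * ⟪e - mid, A (e - mid)⟫ := by
          rw [hc2]
          push_cast
          ring
        rw [this, Complex.re_ofReal_mul]
      have hre := congrArg Complex.re hpar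
      have h2re : ((2 : ℂ) * ⟪u', A u'⟫ + 2 * ⟪v', A v'⟫).re
          = 2 * Φ (f m) + 2 * Φ (f n) := by
        have e1 : ((2 : ℂ) * ⟪u', A u'⟫).re = 2 * Φ (f m) := by
          rw [show ((2:ℂ)) = ((2:ℝ):ℂ) by norm_num, Complex.re_ofReal_mul]
        have e2 : ((2 : ℂ) * ⟪v', A v'⟫).re = 2 * Φ (f n) := by
          rw [show ((2:ℂ)) = ((2:ℝ):ℂ) by norm_num, Complex.re_ofReal_mul]
        rw [Complex.add_re, e1, e2]
      rw [Complex.add_re, h4, h2re] at hre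
      have h5 := hcoer (f n - f m)
      have h6 : (⟪f n - f m, A (f n - f m)⟫ : ℂ).re = (⟪u' - v', A (u' - v')⟫ : ℂ).re := by
        rw [huv]
      have h7 := hfΦ m
      have h8 := hfΦ n
      have h9 : (2:ℝ)/((m:ℝ)+1) = 2*(1/((m:ℝ)+1)) := by ring
      have h10 : (2:ℝ)/((n:ℝ)+1) = 2*(1/((n:ℝ)+1)) := by ring
      linarith
    -- Cauchy sequence
    have hb0 : Filter.Tendsto (fun N : ℕ => Real.sqrt (4 / (lam * (N + 1)))) Filter.atTop (nhds 0) := by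
      have h1 : Filter.Tendsto (fun N : ℕ => 4 / (lam * (N + 1))) Filter.atTop (nhds 0) := by
        have h2 := (tendsto_one_div_add_atTop_nhds_zero_nat).const_mul (4 / lam)
        rw [mul_zero] at h2
        refine h2.congr (fun N => ?_)
        rw [div_mul_div_comm, mul_one]
      have h3 : Filter.Tendsto Real.sqrt (nhds 0) (nhds 0) := by
        simpa using (Real.continuous_sqrt.tendsto 0)
      exact h3.comp h1
    have hcauchy : CauchySeq f := by
      apply cauchySeq_of_le_tendsto_0 (fun N : ℕ => Real.sqrt (4 / (lam * ((N:ℝ)+1)))) ?_ hb0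
      intro m n N hm hn
      rw [dist_eq_norm]
      rw [show f m - f n = -(f n - f m) by abel, norm_neg]
      rw [Real.le_sqrt (norm_nonneg _)]
      have h1 := hkey m n
      have h2 : (1:ℝ) / (m+1) ≤ 1 / (N+1) := by
        apply one_div_le_one_div_of_le (by positivity)
        exact_mod_cast Nat.succ_le_succ hm
      have h3 : (1:ℝ) / (n+1) ≤ 1 / (N+1) := by
        apply one_div_le_one_div_of_le (by positivity)
        exact_mod_cast Nat.succ_le_succ hn
      rw [le_div_iff₀ (by positivity)]
      have h4 : 2 / ((m:ℝ)+1) + 2 / ((n:ℝ)+1) ≤ 4 / ((N:ℝ)+1) := by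
        have : (2:ℝ) / (m+1) = 2 * (1/(m+1)) := by ring
        have : (2:ℝ) / (n+1) = 2 * (1/(n+1)) := by ring
        calc (2:ℝ) / (m+1) + 2 / (n+1) = 2 * (1/(m+1)) + 2 * (1/(n+1)) := by ring
          _ ≤ 2 * (1/(N+1)) + 2 * (1/(N+1)) := by linarith
          _ = 4 / ((N:ℝ)+1) := by ring
      have h5 : lam * ‖f n - f m‖ ^ 2 ≤ 4 / ((N:ℝ)+1) := le_trans h1 h4
      calc ‖f n - f m‖ ^ 2 * (lam * (N+1)) = (lam * ‖f n - f m‖^2) * ((N:ℝ)+1) := by ring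
        _ ≤ (4 / ((N:ℝ)+1)) * ((N:ℝ)+1) := by
            apply mul_le_mul_of_nonneg_right h5 (by positivity)
        _ = 4 := by field_simp
      positivity
    obtain ⟨u, hu⟩ := cauchySeq_tendsto_of_complete hcauchy
    have humem : u ∈ closure (V₁ : Set H) :=
      mem_closure_of_tendsto hu (Filter.Eventually.of_forall fun n => hfmem n)
    have hΦcont : Continuous Φ := quad_continuous A e
    have hΦu_tend : Filter.Tendsto (fun n => Φ (f n)) Filter.atTop (nhds (Φ u)) :=
      (hΦcont.tendsto u).comp hu
    have hΦu_le : Φ u ≤ α := by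
      have h2 : Filter.Tendsto (fun n : ℕ => α + 1/((n:ℝ)+1)) Filter.atTop (nhds α) := by
        have h' := tendsto_one_div_add_atTop_nhds_zero_nat.const_add α
        simpa using h'
      exact le_of_tendsto_of_tendsto' hΦu_tend h2 (fun n => (hfΦ n).le)
    have hΦu : Φ u = α := le_antisymm hΦu_le
      (ge_of_tendsto hΦu_tend (Filter.Eventually.of_forall hfge))
    have hΦcl : ∀ k ∈ closure (V₁ : Set H), α ≤ Φ k := by
      intro k hk
      obtain ⟨sq, hsq, hsqlim⟩ := mem_closure_iff_seq_limit.mp hk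
      exact ge_of_tendsto ((hΦcont.tendsto k).comp hsqlim)
        (Filter.Eventually.of_forall fun n => csInf_le hS₁bdd ⟨sq n, hsq n, rfl⟩)
    set x : H := e - u with hxdef
    have hxAx_re : (⟪x, A x⟫ : ℂ).re = α := hΦu
    have hxAx : (⟪x, A x⟫ : ℂ) = (α : ℂ) := by
      rw [quad_real A hsa x, hxAx_re]
    -- orthogonality of the residual
    have hortho : ∀ y' ∈ R₁, (A x) y' = 0 := by
      intro y' hy'
      set w : H := evec y' with hw
      set s : ℂ := ⟪w, A x⟫ with hs
      have hsval : (A x) y' = s := by rw [hs, hw, inner_evec_left]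
      set cw : ℝ := (⟪w, A w⟫ : ℂ).re with hcw
      have hcw0 : 0 ≤ cw := le_trans (by positivity) (hcoer w)
      have hq : ∀ ε : ℝ, 0 < ε →
          2 * ε * Complex.normSq s ≤ ε^2 * Complex.normSq s * cw := by
        intro ε hε
        set t : ℂ := (ε:ℂ) * s with ht
        have hmem : u + t • w ∈ closure (V₁ : Set H) := by
          have h1 : t • w ∈ V₁ :=
            Submodule.smul_mem _ _ (Submodule.subset_span ⟨y', hy', rfl⟩)
          have h2 : u ∈ V₁.topologicalClosure := humem
          have h3 : t • w ∈ V₁.topologicalClosure := Submodule.le_topologicalClosure V₁ h1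
          exact Submodule.add_mem _ h2 h3
        have hαq := hΦcl _ hmem
        have hxw : e - (u + t • w) = x - t • w := by
          rw [hxdef, sub_add_eq_sub_sub]
        have hΦval : Φ (u + t • w) = (⟪x - t • w, A (x - t • w)⟫ : ℂ).re := by
          show (⟪e - (u + t • w), A (e - (u + t • w))⟫ : ℂ).re = _
          rw [hxw]
        have hexp := expand_quad A hsa x w t
        have hcs : s * starRingEnd ℂ s = ((Complex.normSq s : ℝ) : ℂ) := Complex.mul_conj s
        have hcs' : starRingEnd ℂ s * s = ((Complex.normSq s : ℝ) : ℂ) := by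
          rw [mul_comm]; exact Complex.mul_conj s
        have e1 : t * starRingEnd ℂ s = ((ε * Complex.normSq s : ℝ) : ℂ) := by
          rw [ht, mul_assoc, hcs, Complex.ofReal_mul]
        have e2 : starRingEnd ℂ t * s = ((ε * Complex.normSq s : ℝ) : ℂ) := by
          rw [ht, map_mul, Complex.conj_ofReal, mul_assoc, hcs', Complex.ofReal_mul]
        have e3 : starRingEnd ℂ t * t = ((ε^2 * Complex.normSq s : ℝ) : ℂ) := by
          rw [ht, map_mul, Complex.conj_ofReal,
            show ((ε:ℂ) * starRingEnd ℂ s) * ((ε:ℂ) * s) = ((ε:ℂ) * (ε:ℂ)) * (starRingEnd ℂ s * s) by ring,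
            hcs']
          push_cast
          ring
        have hval : (⟪x - t • w, A (x - t • w)⟫ : ℂ).re
            = α - 2 * (ε * Complex.normSq s) + (ε^2 * Complex.normSq s) * cw := by
          rw [hexp, hxAx, ← hs, e1, e2, e3]
          simp only [Complex.add_re, Complex.sub_re, Complex.ofReal_re, Complex.re_ofReal_mul, ← hcw]
          ring
        rw [hΦval, hval] at hαq
        nlinarith [hαq]
      by_contra hne
      have hr : 0 < Complex.normSq s := by
        apply Complex.normSq_pos.mpr
        rw [← hsval]
        exact hne
      have hε : (0:ℝ) < 1/(cw+1) := by positivity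
      have hq1 := hq (1/(cw+1)) hε
      have h3 : (1/(cw+1)) * (cw + 1) = 1 := by field_simp
      nlinarith [hq1, hr, hcw0, hε, mul_pos hε hr]
    have hu_zero : ∀ z, z ∉ R₁ → u z = 0 := fun z hz => closure_span_apply_eq_zero humem hz
    have huAx : (⟪u, A x⟫ : ℂ) = 0 := by
      rw [lp.inner_eq_tsum]
      have hterm : ∀ i, ⟪u i, (A x) i⟫ = (0:ℂ) := by
        intro i
        by_cases hi : i ∈ R₁
        · simp [hortho i hi]
        · simp [hu_zero i hi]
      rw [tsum_congr hterm, tsum_zero]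
    have hAx_x₀ : (A x) x₀ = (α : ℂ) := by
      have h1 : (⟪e, A x⟫ : ℂ) = (A x) x₀ := by rw [he]; exact inner_evec_left x₀ (A x)
      have h2 : (⟪x, A x⟫ : ℂ) = ⟪e, A x⟫ - ⟪u, A x⟫ := by
        rw [hxdef, inner_sub_left]
      rw [huAx, sub_zero, h1, hxAx] at h2
      exact h2.symm
    have hα0 : ((α:ℝ) : ℂ) ≠ 0 := by
      exact_mod_cast ne_of_gt hαpos
    set v : H := ((α:ℝ) : ℂ)⁻¹ • (A x) with hv
    set g' : H := e - v with hg'def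
    have hg'supp : ∀ z, z ∉ R₂ → g' z = 0 := by
      intro z hz
      have hcoe : g' z = e z - ((α:ℝ):ℂ)⁻¹ * (A x) z := by
        rw [hg'def]
        rw [lp.coeFn_sub]
        simp only [Pi.sub_apply]
        congr 1
      have hzmem : z ∈ insert x₀ (R₁ ∪ R₂) := by rw [hcover]; exact Set.mem_univ z
      rcases hzmem with rfl | hz2
      · rw [hcoe, he_x₀, hAx_x₀, inv_mul_cancel₀ hα0, sub_self]
      · rcases hz2 with hz1 | hz2
        · rw [hcoe, he_ne z (by rintro rfl; exact hx₁ hz1), hortho z hz1]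
          simp
        · exact absurd hz2 hz
    have hg'cl : g' ∈ closure (V₂ : Set H) := mem_closure_span_of_support hg'supp
    have hΨg' : Ψ g' = 1/α := by
      have h1 : e - g' = v := by rw [hg'def, sub_sub_cancel]
      have h2 : (⟪A x, x⟫ : ℂ) = (α : ℂ) := by rw [hsa]; exact hxAx
      show (⟪e - g', B (e - g')⟫ : ℂ).re = 1/α
      rw [h1, hv, map_smul, inner_smul_left, inner_smul_right, hBA, h2]
      rw [map_inv₀, Complex.conj_ofReal]
      rw [show ((α:ℝ):ℂ)⁻¹ * (((α:ℝ):ℂ)⁻¹ * ((α:ℝ):ℂ)) = ((α:ℝ):ℂ)⁻¹ by field_simp]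
      rw [← Complex.ofReal_inv, Complex.ofReal_re, inv_eq_one_div]
    have hβle : β ≤ 1/α := by
      obtain ⟨sq, hsq, hsqlim⟩ := mem_closure_iff_seq_limit.mp hg'cl
      have hcont : Continuous Ψ := quad_continuous B e
      have htend : Filter.Tendsto (fun n => Ψ (sq n)) Filter.atTop (nhds (Ψ g')) :=
        (hcont.tendsto g').comp hsqlim
      rw [← hΨg']
      exact ge_of_tendsto htend
        (Filter.Eventually.of_forall fun n => csInf_le hS₂bdd ⟨sq n, hsq n, rfl⟩)
    calc α * β ≤ α * (1/α) := mul_le_mul_of_nonneg_left hβle hαpos.le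
      _ = 1 := by field_simp
  linarith
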